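/- arXiv:2104.06245 — 4 statements merged into one kernel-verified Lean document; each statement's English description precedes it below -/
import Mathlib

section
/- For every parameter vector θ ∈ ℝ^d and every coordinate i ∈ {1,…,d}, the losses J_CE and J_HARD are differentiable at θ and the i-th coordinate of the gradient bias b(θ) = ∇J_CE(θ) − ∇J_HARD(θ) satisfies b_i(θ) = Σ_{x∈X} pop(x) · Σ_{y∈Y} (p_θ(y|x) − γ_θ(y|x)) · ∂s_θ(x,y)/∂θ_i. -/
open Finset

noncomputable section

/-- Model distribution `p_θ(y|x) = exp(s_θ(x,y)) / Σ_{y'} exp(s_θ(x,y'))`. -/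
def model {X Y : Type*} [Fintype Y] {d : ℕ} (s : (Fin d → ℝ) → X → Y → ℝ)
    (θ : Fin d → ℝ) (x : X) (y : Y) : ℝ :=
  Real.exp (s θ x y) / ∑ y' : Y, Real.exp (s θ x y')

/-- NCE discriminator `π_θ(k|x, y_{1:K})`. -/
def nceProb {X Y : Type*} {d K : ℕ} (s : (Fin d → ℝ) → X → Y → ℝ)
    (θ : Fin d → ℝ) (x : X) (ys : Fin K → Y) (k : Fin K) : ℝ :=
  Real.exp (s θ x (ys k)) / ∑ k' : Fin K, Real.exp (s θ x (ys k'))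

/-- Marginal `pop(x) = Σ_y pop(x,y)`. -/
def popX {X Y : Type*} [Fintype Y] (pop : X × Y → ℝ) (x : X) : ℝ :=
  ∑ y : Y, pop (x, y)

/-- Conditional `pop(y|x) = pop(x,y) / pop(x)`. -/
def popCond {X Y : Type*} [Fintype Y] (pop : X × Y → ℝ) (x : X) (y : Y) : ℝ :=
  pop (x, y) / popX pop x

/-- Cross-entropy loss `J_CE(θ) = Σ_{(x,y)} pop(x,y) · (−log p_θ(y|x))`. -/
def JCE {X Y : Type*} [Fintype X] [Fintype Y] {d : ℕ}
    (s : (Fin d → ℝ) → X → Y → ℝ) (pop : X × Y → ℝ) (θ : Fin d → ℝ) : ℝ :=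
  ∑ x : X, ∑ y : Y, pop (x, y) * (-Real.log (model s θ x y))

/-- Hard-negative NCE loss with `K = m + 1` candidates: the gold `y₁` plus `m` negatives
`y_{2:K}` drawn from `h(·|x,y₁)`. -/
def JHARD {X Y : Type*} [Fintype X] [Fintype Y] {d m : ℕ}
    (s : (Fin d → ℝ) → X → Y → ℝ) (pop : X × Y → ℝ)
    (h : X → Y → (Fin m → Y) → ℝ) (θ : Fin d → ℝ) : ℝ :=
  ∑ x : X, ∑ y1 : Y, pop (x, y1) *
    ∑ yn : Fin m → Y, h x y1 yn * (-Real.log (nceProb s θ x (Fin.cons y1 yn) 0))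

/-- Selection probability `γ_θ(y|x)`: the probability that `y` is included as a candidate
(either as the gold or a negative) and then selected by the NCE discriminator. -/
def gam {X Y : Type*} [Fintype Y] [DecidableEq Y] {d m : ℕ}
    (s : (Fin d → ℝ) → X → Y → ℝ) (pop : X × Y → ℝ)
    (h : X → Y → (Fin m → Y) → ℝ) (θ : Fin d → ℝ) (x : X) (y : Y) : ℝ :=
  ∑ y1 : Y, popCond pop x y1 *
    ∑ yn : Fin m → Y, h x y1 yn *
      ∑ k : Fin (m + 1),
        (if (Fin.cons y1 yn : Fin (m + 1) → Y) k = y then (1 : ℝ) else 0) * nceProb s θ x (Fin.cons y1 yn) k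

lemma inv_mul_sum_eq {ι : Type*} [Fintype ι] (c : ℝ) (f g : ι → ℝ) :
    c⁻¹ * ∑ i : ι, f i * g i = ∑ i : ι, f i / c * g i := by
  rw [Finset.mul_sum]; exact Finset.sum_congr rfl fun i _ => by ring

lemma aux_per_x {Y : Type*} [Fintype Y] [DecidableEq Y] {m : ℕ}
    (E p : Y → ℝ) (hp : ∀ y, 0 ≤ p y)
    (h : Y → (Fin m → Y) → ℝ) (hh1 : ∀ y1, ∑ yn : Fin m → Y, h y1 yn = 1)
    (w : Y → ℝ) (Z P : ℝ) (hP : P = ∑ y' : Y, p y')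
    (π : Y → (Fin m → Y) → Fin (m+1) → ℝ)
    (hπ : ∀ y1 yn k, π y1 yn k = E ((Fin.cons y1 yn : Fin (m+1) → Y) k) /
       ∑ k' : Fin (m+1), E ((Fin.cons y1 yn : Fin (m+1) → Y) k'))
    (T : Y → ℝ)
    (hT : ∀ y1, T y1 = ∑ yn : Fin m → Y, h y1 yn *
       ∑ k : Fin (m+1), π y1 yn k * w ((Fin.cons y1 yn : Fin (m+1) → Y) k)) :
    (∑ y : Y, p y * (Z⁻¹ * ∑ y' : Y, E y' * w y' - w y))
      - (∑ y1 : Y, p y1 * ∑ yn : Fin m → Y, h y1 yn *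
          ((∑ k : Fin (m+1), E ((Fin.cons y1 yn : Fin (m+1) → Y) k))⁻¹ *
              ∑ k : Fin (m+1), E ((Fin.cons y1 yn : Fin (m+1) → Y) k) *
                w ((Fin.cons y1 yn : Fin (m+1) → Y) k)
            - w y1))
    = P * ∑ y : Y,
        (E y / Z - ∑ y1 : Y, p y1 / P * ∑ yn : Fin m → Y, h y1 yn *
            ∑ k : Fin (m+1),
              (if (Fin.cons y1 yn : Fin (m+1) → Y) k = y then (1:ℝ) else 0) * π y1 yn k) * w y := by
  have key : ∀ (y1 : Y) (yn : Fin m → Y), (∑ y : Y, (∑ k : Fin (m+1),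
        (if (Fin.cons y1 yn : Fin (m+1) → Y) k = y then (1:ℝ) else 0) * π y1 yn k) * w y)
      = ∑ k : Fin (m+1), π y1 yn k * w ((Fin.cons y1 yn : Fin (m+1) → Y) k) := by
    intro y1 yn
    simp only [Finset.sum_mul, ite_mul, one_mul, zero_mul]
    rw [Finset.sum_comm]
    exact Finset.sum_congr rfl fun k _ => by simp [Finset.sum_ite_eq]
  have hA : (∑ y : Y, p y * (Z⁻¹ * ∑ y' : Y, E y' * w y' - w y))
      = P * (∑ y : Y, E y / Z * w y) - ∑ y : Y, p y * w y := by
    rw [inv_mul_sum_eq, hP]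
    simp only [mul_sub, Finset.sum_sub_distrib, ← Finset.sum_mul]
  have hB : (∑ y1 : Y, p y1 * ∑ yn : Fin m → Y, h y1 yn *
          ((∑ k : Fin (m+1), E ((Fin.cons y1 yn : Fin (m+1) → Y) k))⁻¹ *
              ∑ k : Fin (m+1), E ((Fin.cons y1 yn : Fin (m+1) → Y) k) *
                w ((Fin.cons y1 yn : Fin (m+1) → Y) k)
            - w y1))
      = (∑ y1 : Y, p y1 * T y1) - ∑ y : Y, p y * w y := by
    have inner : ∀ y1 : Y, (∑ yn : Fin m → Y, h y1 yn *
          ((∑ k : Fin (m+1), E ((Fin.cons y1 yn : Fin (m+1) → Y) k))⁻¹ *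
              ∑ k : Fin (m+1), E ((Fin.cons y1 yn : Fin (m+1) → Y) k) *
                w ((Fin.cons y1 yn : Fin (m+1) → Y) k)
            - w y1)) = T y1 - w y1 := by
      intro y1
      rw [hT]
      calc (∑ yn : Fin m → Y, h y1 yn *
          ((∑ k : Fin (m+1), E ((Fin.cons y1 yn : Fin (m+1) → Y) k))⁻¹ *
              ∑ k : Fin (m+1), E ((Fin.cons y1 yn : Fin (m+1) → Y) k) *
                w ((Fin.cons y1 yn : Fin (m+1) → Y) k)
            - w y1))
          = ∑ yn : Fin m → Y, (h y1 yn *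
              (∑ k : Fin (m+1), π y1 yn k * w ((Fin.cons y1 yn : Fin (m+1) → Y) k))
            - h y1 yn * w y1) := by
            refine Finset.sum_congr rfl fun yn _ => ?_
            rw [inv_mul_sum_eq, mul_sub]
            simp only [← hπ]
        _ = (∑ yn : Fin m → Y, h y1 yn *
              ∑ k : Fin (m+1), π y1 yn k * w ((Fin.cons y1 yn : Fin (m+1) → Y) k))
            - (∑ yn : Fin m → Y, h y1 yn) * w y1 := by
            rw [Finset.sum_sub_distrib, ← Finset.sum_mul]
        _ = _ := by rw [hh1, one_mul]
    calc (∑ y1 : Y, p y1 * ∑ yn : Fin m → Y, h y1 yn *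
          ((∑ k : Fin (m+1), E ((Fin.cons y1 yn : Fin (m+1) → Y) k))⁻¹ *
              ∑ k : Fin (m+1), E ((Fin.cons y1 yn : Fin (m+1) → Y) k) *
                w ((Fin.cons y1 yn : Fin (m+1) → Y) k)
            - w y1))
        = ∑ y1 : Y, (p y1 * T y1 - p y1 * w y1) := by
          refine Finset.sum_congr rfl fun y1 _ => ?_
          rw [inner, mul_sub]
      _ = _ := by rw [Finset.sum_sub_distrib]
  have hPT : (∑ y1 : Y, p y1 * T y1) = P * ∑ y1 : Y, p y1 / P * T y1 := by
    rcases eq_or_ne P 0 with h0 | h0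
    · have hz : ∀ y1, p y1 = 0 := by
        have hs0 : ∑ y' : Y, p y' = 0 := by rw [← hP]; exact h0
        intro y1
        exact (Finset.sum_eq_zero_iff_of_nonneg (fun y _ => hp y)).mp hs0 y1 (Finset.mem_univ _)
      simp [hz, h0]
    · rw [Finset.mul_sum]
      refine Finset.sum_congr rfl fun y1 _ => ?_
      field_simp
  have hG : (∑ y : Y, (∑ y1 : Y, p y1 / P * ∑ yn : Fin m → Y, h y1 yn *
          ∑ k : Fin (m+1),
            (if (Fin.cons y1 yn : Fin (m+1) → Y) k = y then (1:ℝ) else 0) * π y1 yn k) * w y)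
      = ∑ y1 : Y, p y1 / P * T y1 := by
    simp only [Finset.sum_mul]
    rw [Finset.sum_comm]
    refine Finset.sum_congr rfl fun y1 _ => ?_
    simp only [mul_assoc]
    rw [← Finset.mul_sum]
    congr 1
    rw [hT]
    simp only [Finset.sum_mul]
    rw [Finset.sum_comm]
    refine Finset.sum_congr rfl fun yn _ => ?_
    simp only [mul_assoc]
    rw [← Finset.mul_sum]
    congr 1
    exact key y1 yn
  rw [hA, hB, hPT]
  have hR : (∑ y : Y,
        (E y / Z - ∑ y1 : Y, p y1 / P * ∑ yn : Fin m → Y, h y1 yn *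
            ∑ k : Fin (m+1),
              (if (Fin.cons y1 yn : Fin (m+1) → Y) k = y then (1:ℝ) else 0) * π y1 yn k) * w y)
      = (∑ y : Y, E y / Z * w y) - ∑ y1 : Y, p y1 / P * T y1 := by
    simp only [sub_mul, Finset.sum_sub_distrib, hG]
  rw [hR]
  ring

/-- **Theorem 1, bias of the hard-negative NCE gradient.**
`J_CE` and `J_HARD` are differentiable at every `θ`, and for every coordinate `i`,
`b_i(θ) = ∇J_CE(θ)_i − ∇J_HARD(θ)_i
       = Σ_x pop(x) · Σ_y (p_θ(y|x) − γ_θ(y|x)) · ∂s_θ(x,y)/∂θ_i`. -/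
theorem bias_formula {X Y : Type*} [Fintype X] [Fintype Y] [Nonempty X] [Nonempty Y]
    [DecidableEq Y] {d m : ℕ} (hd : 1 ≤ d) (hm : 1 ≤ m)
    (s : (Fin d → ℝ) → X → Y → ℝ)
    (hs : ∀ x y, Differentiable ℝ fun θ => s θ x y)
    (pop : X × Y → ℝ) (hpop : ∀ p, 0 ≤ pop p) (hpop1 : ∑ p : X × Y, pop p = 1)
    (h : X → Y → (Fin m → Y) → ℝ)
    (hh : ∀ x y1 yn, 0 ≤ h x y1 yn)
    (hh1 : ∀ x y1, ∑ yn : Fin m → Y, h x y1 yn = 1)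
    (θ : Fin d → ℝ) :
    DifferentiableAt ℝ (JCE s pop) θ ∧ DifferentiableAt ℝ (JHARD s pop h) θ ∧
      ∀ i : Fin d,
        fderiv ℝ (JCE s pop) θ (Pi.single i 1)
            - fderiv ℝ (JHARD s pop h) θ (Pi.single i 1) =
          ∑ x : X, popX pop x * ∑ y : Y,
            (model s θ x y - gam s pop h θ x y) *
              fderiv ℝ (fun θ' => s θ' x y) θ (Pi.single i 1) := by
  classical
  have hv : ∀ x y, HasFDerivAt (fun θ' => s θ' x y)
      (fderiv ℝ (fun θ' => s θ' x y) θ) θ := fun x y => ((hs x y) θ).hasFDerivAt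
  have hZpos : ∀ (θ' : Fin d → ℝ) (x : X), 0 < ∑ y' : Y, Real.exp (s θ' x y') := fun θ' x =>
    Finset.sum_pos (fun y _ => Real.exp_pos _) Finset.univ_nonempty
  have hWpos : ∀ (θ' : Fin d → ℝ) (x : X) (ys : Fin (m+1) → Y),
      0 < ∑ k : Fin (m+1), Real.exp (s θ' x (ys k)) := fun θ' x ys =>
    Finset.sum_pos (fun k _ => Real.exp_pos _) Finset.univ_nonempty
  have hlogm : ∀ (θ' : Fin d → ℝ) x y, -Real.log (model s θ' x y)
      = Real.log (∑ y' : Y, Real.exp (s θ' x y')) - s θ' x y := by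
    intro θ' x y
    rw [model, Real.log_div (Real.exp_pos _).ne' (hZpos θ' x).ne', Real.log_exp]
    ring
  have hlogn : ∀ (θ' : Fin d → ℝ) x (ys : Fin (m+1) → Y), -Real.log (nceProb s θ' x ys 0)
      = Real.log (∑ k : Fin (m+1), Real.exp (s θ' x (ys k))) - s θ' x (ys 0) := by
    intro θ' x ys
    rw [nceProb, Real.log_div (Real.exp_pos _).ne' (hWpos θ' x ys).ne', Real.log_exp]
    ring
  have hlogZ : ∀ x, HasFDerivAt (fun θ' => Real.log (∑ y' : Y, Real.exp (s θ' x y')))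
      ((∑ y' : Y, Real.exp (s θ x y'))⁻¹ •
        ∑ y' : Y, Real.exp (s θ x y') • fderiv ℝ (fun θ' => s θ' x y') θ) θ := by
    intro x
    have hsum : HasFDerivAt (fun θ' => ∑ y' : Y, Real.exp (s θ' x y'))
        (∑ y' : Y, Real.exp (s θ x y') • fderiv ℝ (fun θ' => s θ' x y') θ) θ :=
      HasFDerivAt.fun_sum (fun y' _ => (hv x y').exp)
    exact hsum.log (hZpos θ x).ne'
  have hlogW : ∀ x (ys : Fin (m+1) → Y),
      HasFDerivAt (fun θ' => Real.log (∑ k : Fin (m+1), Real.exp (s θ' x (ys k))))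
      ((∑ k : Fin (m+1), Real.exp (s θ x (ys k)))⁻¹ •
        ∑ k : Fin (m+1), Real.exp (s θ x (ys k)) • fderiv ℝ (fun θ' => s θ' x (ys k)) θ) θ := by
    intro x ys
    have hsum : HasFDerivAt (fun θ' => ∑ k : Fin (m+1), Real.exp (s θ' x (ys k)))
        (∑ k : Fin (m+1), Real.exp (s θ x (ys k)) • fderiv ℝ (fun θ' => s θ' x (ys k)) θ) θ :=
      HasFDerivAt.fun_sum (fun k _ => (hv x (ys k)).exp)
    exact hsum.log (hWpos θ x ys).ne'
  have hJCE' : JCE s pop = fun θ' => ∑ x : X, ∑ y : Y, pop (x, y) *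
      (Real.log (∑ y' : Y, Real.exp (s θ' x y')) - s θ' x y) := by
    funext θ'
    simp only [JCE, hlogm]
  have hJH' : JHARD s pop h = fun θ' => ∑ x : X, ∑ y1 : Y, pop (x, y1) *
      ∑ yn : Fin m → Y, h x y1 yn *
        (Real.log (∑ k : Fin (m+1), Real.exp (s θ' x ((Fin.cons y1 yn : Fin (m+1) → Y) k)))
          - s θ' x ((Fin.cons y1 yn : Fin (m+1) → Y) 0)) := by
    funext θ'
    simp only [JHARD, hlogn]
  have hCE : HasFDerivAt (JCE s pop)
      (∑ x : X, ∑ y : Y, pop (x, y) •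
        (((∑ y' : Y, Real.exp (s θ x y'))⁻¹ •
            ∑ y' : Y, Real.exp (s θ x y') • fderiv ℝ (fun θ' => s θ' x y') θ)
          - fderiv ℝ (fun θ' => s θ' x y) θ)) θ := by
    rw [hJCE']
    exact HasFDerivAt.fun_sum fun x _ => HasFDerivAt.fun_sum fun y _ =>
      ((hlogZ x).sub (hv x y)).const_mul _
  have hH : HasFDerivAt (JHARD s pop h)
      (∑ x : X, ∑ y1 : Y, pop (x, y1) •
        ∑ yn : Fin m → Y, h x y1 yn •
          (((∑ k : Fin (m+1), Real.exp (s θ x ((Fin.cons y1 yn : Fin (m+1) → Y) k)))⁻¹ •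
              ∑ k : Fin (m+1), Real.exp (s θ x ((Fin.cons y1 yn : Fin (m+1) → Y) k)) •
                fderiv ℝ (fun θ' => s θ' x ((Fin.cons y1 yn : Fin (m+1) → Y) k)) θ)
            - fderiv ℝ (fun θ' => s θ' x ((Fin.cons y1 yn : Fin (m+1) → Y) 0)) θ)) θ := by
    rw [hJH']
    refine HasFDerivAt.fun_sum fun x _ => HasFDerivAt.fun_sum fun y1 _ => HasFDerivAt.const_mul ?_ _
    exact HasFDerivAt.fun_sum fun yn _ => HasFDerivAt.const_mul
      ((hlogW x (Fin.cons y1 yn)).sub (hv x _)) _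
  refine ⟨hCE.differentiableAt, hH.differentiableAt, ?_⟩
  intro i
  rw [hCE.fderiv, hH.fderiv]
  simp only [ContinuousLinearMap.sum_apply, ContinuousLinearMap.smul_apply,
    ContinuousLinearMap.sub_apply, smul_eq_mul]
  rw [← Finset.sum_sub_distrib]
  refine Finset.sum_congr rfl fun x _ => ?_
  simp only [model, gam, popCond, Fin.cons_zero]
  exact aux_per_x (fun y => Real.exp (s θ x y)) (fun y => pop (x, y)) (fun y => hpop (x, y))
    (h x) (hh1 x)
    (fun y => (fderiv ℝ (fun θ' => s θ' x y) θ) (Pi.single i 1))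
    (∑ y' : Y, Real.exp (s θ x y')) (popX pop x) rfl
    (fun y1 yn k => nceProb s θ x (Fin.cons y1 yn) k) (fun _ _ _ => rfl)
    (fun y1 => ∑ yn : Fin m → Y, h x y1 yn *
      ∑ k : Fin (m+1), nceProb s θ x (Fin.cons y1 yn) k *
        (fderiv ℝ (fun θ' => s θ' x ((Fin.cons y1 yn : Fin (m+1) → Y) k)) θ) (Pi.single i 1))
    (fun _ => rfl)
end
end

section
/- For every θ ∈ ℝ^d and every coordinate i ∈ {1,…,d}, the partial derivative of the hard-negative NCE loss satisfies ∂J_HARD/∂θ_i(θ) = − Σ_{(x,y_1)} pop(x,y_1)·∂s_θ(x,y_1)/∂θ_i + Σ_{x∈X} pop(x) · Σ_{y∈Y} γ_θ(y|x)·∂s_θ(x,y)/∂θ_i. -/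
open Finset

noncomputable section

lemma hasFDerivAt_negLog {X Y : Type*} {d K : ℕ} [NeZero K]
    (s : (Fin d → ℝ) → X → Y → ℝ)
    (hs : ∀ x y, Differentiable ℝ fun θ => s θ x y) (θ : Fin d → ℝ) (x : X)
    (ys : Fin K → Y) :
    HasFDerivAt (fun θ' => -Real.log (nceProb s θ' x ys 0))
      ((∑ k : Fin K, nceProb s θ x ys k • fderiv ℝ (fun θ' => s θ' x (ys k)) θ)
        - fderiv ℝ (fun θ' => s θ' x (ys 0)) θ) θ := by
  have Zpos : ∀ θ', (0:ℝ) < ∑ k' : Fin K, Real.exp (s θ' x (ys k')) := fun θ' =>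
    Finset.sum_pos (fun _ _ => Real.exp_pos _) univ_nonempty
  have heq : (fun θ' => -Real.log (nceProb s θ' x ys 0)) =
      fun θ' => Real.log (∑ k' : Fin K, Real.exp (s θ' x (ys k'))) - s θ' x (ys 0) := by
    funext θ'
    rw [nceProb, Real.log_div (Real.exp_pos _).ne' (Zpos θ').ne', Real.log_exp]
    ring
  rw [heq]
  have hZ : HasFDerivAt (fun θ' => ∑ k' : Fin K, Real.exp (s θ' x (ys k')))
      (∑ k' : Fin K, Real.exp (s θ x (ys k')) • fderiv ℝ (fun θ' => s θ' x (ys k')) θ) θ :=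
    HasFDerivAt.fun_sum fun k _ => ((hs x (ys k)).differentiableAt.hasFDerivAt).exp
  have hlog := (hZ.log (Zpos θ).ne').sub (hs x (ys 0)).differentiableAt.hasFDerivAt
  refine hlog.congr_fderiv ?_
  congr 1
  rw [Finset.smul_sum]
  refine Finset.sum_congr rfl fun k _ => ?_
  rw [smul_smul, nceProb, div_eq_inv_mul]


/-- **gradient of the hard-negative NCE loss.**
`∂J_HARD/∂θ_i(θ) = − Σ_{(x,y₁)} pop(x,y₁)·∂s_θ(x,y₁)/∂θ_i
                 + Σ_x pop(x) · Σ_y γ_θ(y|x)·∂s_θ(x,y)/∂θ_i`. -/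
theorem grad_JHARD {X Y : Type*} [Fintype X] [Fintype Y] [Nonempty X] [Nonempty Y]
    [DecidableEq Y] {d m : ℕ} (hd : 1 ≤ d) (hm : 1 ≤ m)
    (s : (Fin d → ℝ) → X → Y → ℝ)
    (hs : ∀ x y, Differentiable ℝ fun θ => s θ x y)
    (pop : X × Y → ℝ) (hpop : ∀ p, 0 ≤ pop p) (hpop1 : ∑ p : X × Y, pop p = 1)
    (h : X → Y → (Fin m → Y) → ℝ)
    (hh : ∀ x y1 yn, 0 ≤ h x y1 yn)
    (hh1 : ∀ x y1, ∑ yn : Fin m → Y, h x y1 yn = 1)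
    (θ : Fin d → ℝ) :
    ∀ i : Fin d,
      fderiv ℝ (JHARD s pop h) θ (Pi.single i 1) =
        -(∑ x : X, ∑ y1 : Y, pop (x, y1) *
            fderiv ℝ (fun θ' => s θ' x y1) θ (Pi.single i 1))
          + ∑ x : X, popX pop x * ∑ y : Y,
              gam s pop h θ x y * fderiv ℝ (fun θ' => s θ' x y) θ (Pi.single i 1) := by
  intro i
  set v : Fin d → ℝ := Pi.single i 1 with hv
  set D : X → Y → (Fin d → ℝ) →L[ℝ] ℝ := fun x y => fderiv ℝ (fun θ' => s θ' x y) θ with hD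
  -- derivative of JHARD
  have hJ : HasFDerivAt (JHARD s pop h)
      (∑ x : X, ∑ y1 : Y, pop (x, y1) •
        ∑ yn : Fin m → Y, h x y1 yn •
          ((∑ k : Fin (m+1), nceProb s θ x (Fin.cons y1 yn) k • D x ((Fin.cons y1 yn : Fin (m+1) → Y) k))
            - D x ((Fin.cons y1 yn : Fin (m+1) → Y) 0))) θ := by
    unfold JHARD
    refine HasFDerivAt.fun_sum fun x _ => HasFDerivAt.fun_sum fun y1 _ => ?_
    exact (HasFDerivAt.fun_sum fun yn _ =>
      (hasFDerivAt_negLog s hs θ x (Fin.cons y1 yn)).const_mul (h x y1 yn)).const_mul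
      (pop (x, y1))
  rw [hJ.fderiv]
  -- evaluate at v
  simp only [ContinuousLinearMap.sum_apply, ContinuousLinearMap.smul_apply,
    ContinuousLinearMap.sub_apply, smul_eq_mul, Fin.cons_zero]
  set a : X → Y → ℝ := fun x y => (D x y) v with ha
  -- RHS reshaping
  rw [← Finset.sum_neg_distrib, ← Finset.sum_add_distrib]
  refine Finset.sum_congr rfl fun x _ => ?_
  -- gam sum collapse
  have hgam : ∑ y : Y, gam s pop h θ x y * a x y =
      ∑ y1 : Y, popCond pop x y1 * ∑ yn : Fin m → Y, h x y1 yn *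
        ∑ k : Fin (m+1), nceProb s θ x (Fin.cons y1 yn) k * a x ((Fin.cons y1 yn : Fin (m+1) → Y) k) := by
    unfold gam
    simp only [Finset.sum_mul, Finset.mul_sum]
    rw [Finset.sum_comm]
    refine Finset.sum_congr rfl fun y1 _ => ?_
    rw [Finset.sum_comm]
    refine Finset.sum_congr rfl fun yn _ => ?_
    rw [Finset.sum_comm]
    refine Finset.sum_congr rfl fun k _ => ?_
    rw [Finset.sum_eq_single ((Fin.cons y1 yn : Fin (m+1) → Y) k)]
    · rw [if_pos rfl]; ring
    · intro y _ hy
      simp [Ne.symm hy]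
    · simp
  rw [hgam, Finset.mul_sum]
  -- push pop through
  have hpp : ∀ y1 : Y, popX pop x * (popCond pop x y1 * ∑ yn : Fin m → Y, h x y1 yn *
        ∑ k : Fin (m+1), nceProb s θ x (Fin.cons y1 yn) k * a x ((Fin.cons y1 yn : Fin (m+1) → Y) k)) =
      pop (x, y1) * ∑ yn : Fin m → Y, h x y1 yn *
        ∑ k : Fin (m+1), nceProb s θ x (Fin.cons y1 yn) k * a x ((Fin.cons y1 yn : Fin (m+1) → Y) k) := by
    intro y1
    rcases eq_or_ne (popX pop x) 0 with hx0 | hx0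
    · have : pop (x, y1) = 0 := by
        have := (Finset.sum_eq_zero_iff_of_nonneg (fun y _ => hpop (x, y))).mp hx0
        exact this y1 (Finset.mem_univ _)
      rw [hx0, this]; ring
    · rw [popCond, ← mul_assoc, mul_div_cancel₀ _ hx0]
  simp only [hpp]
  rw [← Finset.sum_neg_distrib, ← Finset.sum_add_distrib]
  refine Finset.sum_congr rfl fun y1 _ => ?_
  rw [Finset.mul_sum, Finset.mul_sum]
  have : ∀ yn : Fin m → Y, pop (x, y1) * (h x y1 yn *
        ((∑ k : Fin (m+1), nceProb s θ x (Fin.cons y1 yn) k * a x ((Fin.cons y1 yn : Fin (m+1) → Y) k))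
          - a x y1)) =
      (pop (x, y1) * (h x y1 yn *
        ∑ k : Fin (m+1), nceProb s θ x (Fin.cons y1 yn) k * a x ((Fin.cons y1 yn : Fin (m+1) → Y) k)))
        - pop (x, y1) * h x y1 yn * a x y1 := by
    intro yn; ring
  change ∑ yn : Fin m → Y, pop (x, y1) * (h x y1 yn *
      ((∑ k : Fin (m+1), nceProb s θ x (Fin.cons y1 yn) k * a x ((Fin.cons y1 yn : Fin (m+1) → Y) k))
        - a x y1)) = -(pop (x, y1) * a x y1) + _
  simp only [this]
  rw [Finset.sum_sub_distrib]
  have : ∑ yn : Fin m → Y, pop (x, y1) * h x y1 yn * a x y1 = pop (x, y1) * a x y1 := by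
    rw [← Finset.sum_mul, ← Finset.mul_sum, hh1]; ring
  rw [this]; ring
end
end

section
/- Let K equal the cardinality of Y, and suppose the negative distribution h has the property that for every (x,y_1) with pop(x,y_1) > 0, h(·|x,y_1) is supported on tuples y_{2:K} ∈ Y^{K−1} such that y_1, y_2, …, y_K are pairwise distinct. Then the hard-negative NCE loss equals the cross-entropy loss: J_HARD(θ) = J_CE(θ) for every θ ∈ ℝ^d. -/
open Finset

noncomputable section

set_option maxHeartbeats 1000000 in
/-- **with `K = |Y|` and distinct candidates, `J_HARD = J_CE`.**
If `K = |Y|` (here `K = m + 1`) and, for every `(x,y₁)` with `pop(x,y₁) > 0`, the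
negative distribution `h(·|x,y₁)` is supported on tuples making `y₁,…,y_K` pairwise
distinct, then `J_HARD(θ) = J_CE(θ)` for every `θ`. -/
theorem JHARD_eq_JCE_of_full_support {X Y : Type*} [Fintype X] [Fintype Y] [Nonempty X]
    [Nonempty Y] {d m : ℕ} (hd : 1 ≤ d) (hK : m + 1 = Fintype.card Y)
    (s : (Fin d → ℝ) → X → Y → ℝ)
    (pop : X × Y → ℝ) (hpop : ∀ p, 0 ≤ pop p) (hpop1 : ∑ p : X × Y, pop p = 1)
    (h : X → Y → (Fin m → Y) → ℝ)
    (hh : ∀ x y1 yn, 0 ≤ h x y1 yn)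
    (hh1 : ∀ x y1, ∑ yn : Fin m → Y, h x y1 yn = 1)
    (hsupp : ∀ x y1 yn, 0 < pop (x, y1) → h x y1 yn ≠ 0 →
      Function.Injective (Fin.cons y1 yn : Fin (m + 1) → Y))
    (θ : Fin d → ℝ) :
    JHARD s pop h θ = JCE s pop θ := by
  unfold JHARD JCE
  refine Finset.sum_congr rfl fun x _ => Finset.sum_congr rfl fun y1 _ => ?_
  rcases eq_or_lt_of_le (hpop (x, y1)) with hp | hp
  · rw [← hp]; ring
  congr 1
  have : ∀ yn : Fin m → Y, h x y1 yn * (-Real.log (nceProb s θ x (Fin.cons y1 yn) 0))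
      = h x y1 yn * (-Real.log (model s θ x y1)) := by
    intro yn
    rcases eq_or_ne (h x y1 yn) 0 with h0 | h0
    · rw [h0]; ring
    have hinj := hsupp x y1 yn hp h0
    have hbij : Function.Bijective (Fin.cons y1 yn : Fin (m + 1) → Y) :=
      (Fintype.bijective_iff_injective_and_card _).2 ⟨hinj, by simp [hK]⟩
    have hsum : ∑ k' : Fin (m + 1), Real.exp (s θ x ((Fin.cons y1 yn : Fin (m+1) → Y) k'))
        = ∑ y' : Y, Real.exp (s θ x y') :=
      hbij.sum_comp (fun y => Real.exp (s θ x y))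
    have : nceProb s θ x (Fin.cons y1 yn) 0 = model s θ x y1 := by
      unfold nceProb model
      rw [hsum]; rfl
    rw [this]
  rw [Finset.sum_congr rfl fun yn _ => this yn, ← Finset.sum_mul, hh1]
  ring
end
end

section
/- Let K equal the cardinality of Y, and suppose the negative distribution h has the property that for every (x,y_1), h(·|x,y_1) is supported on tuples y_{2:K} ∈ Y^{K−1} such that y_1, y_2, …, y_K are pairwise distinct. Then for every θ ∈ ℝ^d, every x ∈ X with pop(x) > 0, and every y ∈ Y, the selection probability equals the model probability: γ_θ(y|x) = p_θ(y|x). -/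
open Finset

noncomputable section

/-- **with `K = |Y|` and distinct candidates, `γ` equals the model.**
If `K = |Y|` (here `K = m + 1`) and every conditional `h(·|x,y₁)` is supported on tuples
making `y₁,…,y_K` pairwise distinct, then for every `θ`, every `x` with `pop(x) > 0`, and
every `y`, `γ_θ(y|x) = p_θ(y|x)`. -/
theorem gam_eq_model_of_full_support {X Y : Type*} [Fintype X] [Fintype Y] [Nonempty X]
    [Nonempty Y] [DecidableEq Y] {d m : ℕ} (hd : 1 ≤ d) (hK : m + 1 = Fintype.card Y)
    (s : (Fin d → ℝ) → X → Y → ℝ)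
    (pop : X × Y → ℝ) (hpop : ∀ p, 0 ≤ pop p) (hpop1 : ∑ p : X × Y, pop p = 1)
    (h : X → Y → (Fin m → Y) → ℝ)
    (hh : ∀ x y1 yn, 0 ≤ h x y1 yn)
    (hh1 : ∀ x y1, ∑ yn : Fin m → Y, h x y1 yn = 1)
    (hsupp : ∀ x y1 yn, h x y1 yn ≠ 0 →
      Function.Injective (Fin.cons y1 yn : Fin (m + 1) → Y))
    (θ : Fin d → ℝ) (x : X) (hx : 0 < popX pop x) (y : Y) :
    gam s pop h θ x y = model s θ x y := by
  have hcard : Fintype.card (Fin (m+1)) = Fintype.card Y := by simp [hK]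
  have key : ∀ (y1 : Y) (yn : Fin m → Y),
      Function.Injective (Fin.cons y1 yn : Fin (m+1) → Y) →
      (∑ k : Fin (m+1),
        (if (Fin.cons y1 yn : Fin (m+1) → Y) k = y then (1:ℝ) else 0) *
          nceProb s θ x (Fin.cons y1 yn) k) = model s θ x y := by
    intro y1 yn hinj
    set f := (Fin.cons y1 yn : Fin (m+1) → Y) with hf
    have hbij : Function.Bijective f :=
      (Fintype.bijective_iff_injective_and_card f).2 ⟨hinj, hcard⟩
    obtain ⟨k0, hk0⟩ := hbij.2 y
    have hdenom : ∑ k' : Fin (m+1), Real.exp (s θ x (f k')) = ∑ y' : Y, Real.exp (s θ x y') :=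
      Fintype.sum_bijective f hbij _ _ (fun k => rfl)
    have hstep : ∀ k : Fin (m+1), (if f k = y then (1:ℝ) else 0) * nceProb s θ x f k
        = if k = k0 then nceProb s θ x f k else 0 := by
      intro k
      by_cases hkk : k = k0
      · subst hkk; simp [hk0]
      · have hne : f k ≠ y := fun hfk => hkk (hinj (hfk.trans hk0.symm))
        simp [hne, hkk]
    rw [Finset.sum_congr rfl (fun k _ => hstep k), Finset.sum_ite_eq' Finset.univ k0]
    simp only [Finset.mem_univ, if_true]
    unfold nceProb model
    rw [hdenom, hk0]
  have hmid : ∀ y1 : Y,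
      (∑ yn : Fin m → Y, h x y1 yn *
        ∑ k : Fin (m + 1),
          (if (Fin.cons y1 yn : Fin (m + 1) → Y) k = y then (1 : ℝ) else 0) *
            nceProb s θ x (Fin.cons y1 yn) k) = model s θ x y := by
    intro y1
    have hterm : ∀ yn : Fin m → Y, h x y1 yn *
        (∑ k : Fin (m + 1),
          (if (Fin.cons y1 yn : Fin (m + 1) → Y) k = y then (1 : ℝ) else 0) *
            nceProb s θ x (Fin.cons y1 yn) k) = h x y1 yn * model s θ x y := by
      intro yn
      by_cases h0 : h x y1 yn = 0
      · simp [h0]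
      · rw [key y1 yn (hsupp x y1 yn h0)]
    rw [Finset.sum_congr rfl (fun yn _ => hterm yn), ← Finset.sum_mul, hh1, one_mul]
  unfold gam
  rw [Finset.sum_congr rfl (fun y1 _ => by rw [hmid y1]), ← Finset.sum_mul]
  have hone : ∑ y1 : Y, popCond pop x y1 = 1 := by
    unfold popCond
    rw [← Finset.sum_div]
    exact div_self (ne_of_gt hx)
  rw [hone, one_mul]
end
end
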